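/- Under hypotheses (H1), (H2) and (H4), for every P > 0 the sequence C_M(P) = (1/M)·E[log det G_M] converges to a finite limit as M → ∞ (the limit is denoted C(P)). -/

import Mathlib

open MeasureTheory ProbabilityTheory Filter Matrix

/-- The `M × K(M+1)` two-block-diagonal channel matrix built from the fading
vectors `a`, `b` (indexed from `1` as in the paper); the column index set
`Fin (M+1) × Fin K` encodes the `M+1` blocks of `K` columns. -/
def HmatK (K M : ℕ) (a b : ℕ → Fin K → ℂ) :
    Matrix (Fin M) (Fin (M + 1) × Fin K) ℂ :=
  fun i jk =>
    if (jk.1 : ℕ) = (i : ℕ) then a ((i : ℕ) + 1) jk.2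
    else if (jk.1 : ℕ) = (i : ℕ) + 1 then b ((i : ℕ) + 1) jk.2 else 0

/-- `log det (I + (P/K) · H_M H_M*)`, the determinant being real (≥ 1). -/
noncomputable def logdetGK (K M : ℕ) (P : ℝ) (a b : ℕ → Fin K → ℂ) : ℝ :=
  Real.log
    ((Matrix.det
      (1 + ((P / K : ℝ) : ℂ) • (HmatK K M a b * (HmatK K M a b)ᴴ))).re)


set_option linter.unusedSectionVars false
set_option maxHeartbeats 1000000

open MeasureTheory ProbabilityTheory
open scoped ComplexOrder

section MatrixLemmas

variable {n m : Type*} [Fintype n] [DecidableEq n] [Fintype m] [DecidableEq m]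

lemma my_smul_posSemidef {S : Matrix n n ℂ} (hS : S.PosSemidef) {c : ℝ} (hc : 0 ≤ c) :
    ((c : ℂ) • S).PosSemidef := by
  refine PosSemidef.of_dotProduct_mulVec_nonneg ?_ ?_
  · unfold Matrix.IsHermitian
    rw [conjTranspose_smul, hS.isHermitian.eq]
    congr 1
    simp
  · intro x
    rw [smul_mulVec, dotProduct_smul, smul_eq_mul]
    exact mul_nonneg (by exact_mod_cast hc) (hS.dotProduct_mulVec_nonneg x)

lemma my_det_one_add_posSemidef {S : Matrix n n ℂ} (hS : S.PosSemidef) :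
    1 ≤ (1 + S).det := by
  have hH := hS.isHermitian
  set U : Matrix n n ℂ := (Matrix.IsHermitian.eigenvectorUnitary hH : Matrix n n ℂ) with hU
  set D : Matrix n n ℂ := diagonal (RCLike.ofReal ∘ hH.eigenvalues) with hD
  have hUU : U * star U = 1 := (Matrix.mem_unitaryGroup_iff).mp (Matrix.IsHermitian.eigenvectorUnitary hH).2
  have hdecomp : (1 : Matrix n n ℂ) + S = U * ((1 : Matrix n n ℂ) + D) * star U := by
    have hspec := hH.spectral_theorem
    rw [Unitary.conjStarAlgAut_apply] at hspec
    rw [mul_add, add_mul, mul_one, hUU, hD, hU, ← hspec]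
  rw [hdecomp]
  have hdet : (U * ((1 : Matrix n n ℂ) + D) * star U).det = ((1 : Matrix n n ℂ) + D).det := by
    have hUU2 : star U * U = 1 := (Unitary.mem_iff.mp (Matrix.IsHermitian.eigenvectorUnitary hH).2).1
    rw [det_mul, det_mul, mul_comm, ← mul_assoc, ← det_mul, hUU2]
    simp
  rw [hdet]
  have h1D : (1 : Matrix n n ℂ) + D = diagonal (fun i => 1 + (hH.eigenvalues i : ℂ)) := by
    rw [← diagonal_one, hD, diagonal_add]
    rfl
  rw [h1D, det_diagonal]
  calc (1 : ℂ) = ∏ _i : n, 1 := by simp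
  _ ≤ ∏ i : n, (1 + (hH.eigenvalues i : ℂ)) := by
      apply Finset.prod_le_prod
      · intro i _; exact zero_le_one
      · intro i _
        refine le_add_of_nonneg_right ?_
        exact_mod_cast hS.eigenvalues_nonneg i

open scoped MatrixOrder in
lemma my_det_le_det_add {X S : Matrix n n ℂ} (hX : X.PosDef) (hS : S.PosSemidef) :
    X.det ≤ (X + S).det := by
  set Q := CFC.sqrt X with hQdef
  have hQ : Q.PosSemidef := (CFC.sqrt_nonneg X).posSemidef
  have hQQ : Q * Q = X := CFC.sqrt_mul_sqrt_self X (PosSemidef.nonneg hX.posSemidef)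
  have hdetX : (0 : ℂ) < X.det := hX.det_pos
  have hdetQ : Q.det ≠ 0 := by
    intro h
    rw [← hQQ, det_mul, h, mul_zero] at hdetX
    exact lt_irrefl _ hdetX
  have hQunit : IsUnit Q.det := hdetQ.isUnit
  have hQiH : Q⁻¹ᴴ = Q⁻¹ := by
    rw [conjTranspose_nonsing_inv, hQ.isHermitian.eq]
  have hT : (Q⁻¹ * S * Q⁻¹).PosSemidef := by
    have := hS.mul_mul_conjTranspose_same Q⁻¹
    rwa [hQiH] at this
  have hdecomp : X + S = Q * (1 + Q⁻¹ * S * Q⁻¹) * Q := by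
    rw [mul_add, add_mul, mul_one, hQQ]
    congr 1
    symm
    calc Q * (Q⁻¹ * S * Q⁻¹) * Q = (Q * Q⁻¹) * S * (Q⁻¹ * Q) := by
          simp only [Matrix.mul_assoc]
    _ = S := by rw [Matrix.mul_nonsing_inv _ hQunit, Matrix.nonsing_inv_mul _ hQunit, one_mul, mul_one]
  rw [hdecomp, det_mul, det_mul]
  calc X.det = X.det * 1 := (mul_one _).symm
  _ ≤ X.det * (1 + Q⁻¹ * S * Q⁻¹).det :=
      mul_le_mul_of_nonneg_left (my_det_one_add_posSemidef hT) hdetX.le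
  _ = Q.det * (1 + Q⁻¹ * S * Q⁻¹).det * Q.det := by
      rw [← hQQ, det_mul]; ring

lemma my_posDef_of_det_ne_zero {W : Matrix n n ℂ} (hW : W.PosSemidef) (h : W.det ≠ 0) :
    W.PosDef := by
  refine PosDef.of_dotProduct_mulVec_pos hW.isHermitian fun ⦃x⦄ hx => ?_
  refine lt_of_le_of_ne (hW.dotProduct_mulVec_nonneg x) ?_
  intro heq
  have hzero : W *ᵥ x = 0 := (hW.dotProduct_mulVec_zero_iff x).mp heq.symm
  exact h (Matrix.exists_mulVec_eq_zero_iff.mp ⟨x, hx, hzero⟩)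

lemma my_det_le_det_of_le {W D : Matrix n n ℂ} (hW : W.PosSemidef) (hS : (D - W).PosSemidef) :
    W.det ≤ D.det := by
  rcases eq_or_ne W.det 0 with h0 | h0
  · rw [h0]
    have hD : D.PosSemidef := by
      have := hW.add hS
      rwa [add_sub_cancel] at this
    rw [hD.isHermitian.det_eq_prod_eigenvalues]
    apply Finset.prod_nonneg
    intro i _
    exact RCLike.ofReal_nonneg.mpr (hD.eigenvalues_nonneg i)
  · have := my_det_le_det_add (my_posDef_of_det_ne_zero hW h0) hS
    rwa [add_sub_cancel] at this

lemma my_fischer {A : Matrix m m ℂ} {B : Matrix m n ℂ} {D : Matrix n n ℂ}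
    (hG : (fromBlocks A B Bᴴ D).PosDef) :
    (fromBlocks A B Bᴴ D).det ≤ A.det * D.det := by
  have hherm := hG.isHermitian
  rw [isHermitian_fromBlocks_iff] at hherm
  have hA : A.PosDef := by
    refine PosDef.of_dotProduct_mulVec_pos hherm.1 fun ⦃x⦄ hx => ?_
    have := hG.dotProduct_mulVec_pos (x := Sum.elim x 0) (by
      intro h
      apply hx
      funext i
      exact congrFun h (Sum.inl i))
    simpa [fromBlocks_mulVec, Function.star_sumElim] using this
  have : Invertible A := hA.isUnit.invertible
  rw [det_fromBlocks₁₁, invOf_eq_nonsing_inv]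
  have hW : (D - Bᴴ * A⁻¹ * B).PosSemidef :=
    (PosDef.fromBlocks₁₁ B D hA).mp hG.posSemidef
  have hS : (D - (D - Bᴴ * A⁻¹ * B)).PosSemidef := by
    rw [sub_sub_cancel]
    exact (hA.inv.posSemidef).conjTranspose_mul_mul_same B
  exact mul_le_mul_of_nonneg_left (my_det_le_det_of_le hW hS) hA.det_pos.le

lemma my_posDef_submatrix_equiv {G : Matrix n n ℂ} (hG : G.PosDef) (e : m ≃ n) :
    (G.submatrix e e).PosDef := by
  refine PosDef.of_dotProduct_mulVec_pos ((isHermitian_submatrix_equiv e).mpr hG.isHermitian) fun ⦃x⦄ hx => ?_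
  have hx' : x ∘ e.symm ≠ 0 := by
    intro h
    apply hx
    funext i
    have := congrFun h (e i)
    simpa using this
  have := hG.dotProduct_mulVec_pos hx'
  rw [submatrix_mulVec_equiv]
  convert this using 1
  have : star x = (star (x ∘ e.symm)) ∘ e := by
    funext i; simp
  rw [this, comp_equiv_dotProduct_comp_equiv]

lemma my_blocks_decomp {G : Matrix (m ⊕ n) (m ⊕ n) ℂ} (hG : G.IsHermitian) :
    G = fromBlocks G.toBlocks₁₁ G.toBlocks₁₂ G.toBlocks₁₂ᴴ G.toBlocks₂₂ := by
  have h21 : G.toBlocks₂₁ = G.toBlocks₁₂ᴴ := by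
    ext i j
    simp only [toBlocks₂₁, toBlocks₁₂, conjTranspose_apply, of_apply]
    rw [← hG.apply]
  rw [← h21, fromBlocks_toBlocks]

lemma my_det_blocks_le {G : Matrix (m ⊕ n) (m ⊕ n) ℂ} (hG : G.PosDef) :
    G.det ≤ G.toBlocks₁₁.det * G.toBlocks₂₂.det := by
  have h := my_blocks_decomp hG.isHermitian
  calc G.det = (fromBlocks G.toBlocks₁₁ G.toBlocks₁₂ G.toBlocks₁₂ᴴ G.toBlocks₂₂).det := by rw [← h]
  _ ≤ _ := my_fischer (h ▸ hG)

lemma my_posDef_toBlocks₁₁ {G : Matrix (m ⊕ n) (m ⊕ n) ℂ} (hG : G.PosDef) :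
    G.toBlocks₁₁.PosDef := by
  have h := my_blocks_decomp hG.isHermitian
  have hG' := h ▸ hG
  refine PosDef.of_dotProduct_mulVec_pos ?_ fun ⦃x⦄ hx => ?_
  · have := hG'.isHermitian
    rw [isHermitian_fromBlocks_iff] at this
    exact this.1
  · have := hG'.dotProduct_mulVec_pos (x := Sum.elim x 0) (by
      intro hc
      apply hx
      funext i
      exact congrFun hc (Sum.inl i))
    simpa [fromBlocks_mulVec, Function.star_sumElim] using this

lemma my_posDef_toBlocks₂₂ {G : Matrix (m ⊕ n) (m ⊕ n) ℂ} (hG : G.PosDef) :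
    G.toBlocks₂₂.PosDef := by
  have h := my_blocks_decomp hG.isHermitian
  have hG' := h ▸ hG
  refine PosDef.of_dotProduct_mulVec_pos ?_ fun ⦃x⦄ hx => ?_
  · have := hG'.isHermitian
    rw [isHermitian_fromBlocks_iff] at this
    exact this.2.2.2
  · have := hG'.dotProduct_mulVec_pos (x := Sum.elim 0 x) (by
      intro hc
      apply hx
      funext i
      exact congrFun hc (Sum.inr i))
    simpa [fromBlocks_mulVec, Function.star_sumElim] using this

lemma my_hadamard : ∀ (N : ℕ) (G : Matrix (Fin N) (Fin N) ℂ), G.PosDef →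
    G.det ≤ ∏ i, G i i := by
  intro N
  induction N with
  | zero => intro G _; simp [Matrix.det_fin_zero]
  | succ N ih =>
    intro G hG
    set e : Fin N ⊕ Fin 1 ≃ Fin (N + 1) := finSumFinEquiv with he
    set G' := G.submatrix e e with hG'def
    have hG' : G'.PosDef := my_posDef_submatrix_equiv hG e
    have hdet : G'.det = G.det := det_submatrix_equiv_self e G
    have hA := my_posDef_toBlocks₁₁ hG'
    have hD := my_posDef_toBlocks₂₂ hG'
    have h1 : G.det ≤ G'.toBlocks₁₁.det * G'.toBlocks₂₂.det := by
      rw [← hdet]; exact my_det_blocks_le hG'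
    have h2 : G'.toBlocks₁₁.det ≤ ∏ i, G'.toBlocks₁₁ i i := ih _ hA
    have hDdet : G'.toBlocks₂₂.det = G (e (Sum.inr 0)) (e (Sum.inr 0)) := by
      rw [det_fin_one]; rfl
    have hprod : ∏ i, G i i = (∏ i : Fin N, G (e (Sum.inl i)) (e (Sum.inl i))) * G (e (Sum.inr 0)) (e (Sum.inr 0)) := by
      rw [← Equiv.prod_comp e (fun i => G i i), Fintype.prod_sum_type]
      simp
    calc G.det ≤ G'.toBlocks₁₁.det * G'.toBlocks₂₂.det := h1
    _ ≤ (∏ i, G'.toBlocks₁₁ i i) * G'.toBlocks₂₂.det :=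
        mul_le_mul_of_nonneg_right h2 hD.det_pos.le
    _ = ∏ i, G i i := by
        rw [hDdet, hprod]
        congr 1

end MatrixLemmas

def hfunK (K : ℕ) (a b : ℕ → Fin K → ℂ) (i l : ℕ) (k : Fin K) : ℂ :=
  if l = i then a (i + 1) k else if l = i + 1 then b (i + 1) k else 0

lemma HmatK_apply (K M : ℕ) (a b : ℕ → Fin K → ℂ) (i : Fin M) (jk : Fin (M+1) × Fin K) :
    HmatK K M a b i jk = hfunK K a b (i : ℕ) (jk.1 : ℕ) jk.2 := rfl

lemma hfunK_eq_zero {K : ℕ} {a b : ℕ → Fin K → ℂ} {i l : ℕ} {k : Fin K}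
    (h1 : l ≠ i) (h2 : l ≠ i + 1) : hfunK K a b i l k = 0 := by
  unfold hfunK
  rw [if_neg h1, if_neg h2]

lemma gram_apply (K M : ℕ) (a b : ℕ → Fin K → ℂ) (i j : Fin M) :
    (HmatK K M a b * (HmatK K M a b)ᴴ) i j
      = ∑ l ∈ Finset.range (M+1), ∑ k : Fin K,
          hfunK K a b (i : ℕ) l k * star (hfunK K a b (j : ℕ) l k) := by
  rw [mul_apply, Fintype.sum_prod_type,
    ← Fin.sum_univ_eq_sum_range
      (fun l => ∑ k : Fin K, hfunK K a b (i : ℕ) l k * star (hfunK K a b (j : ℕ) l k)) (M+1)]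
  apply Finset.sum_congr rfl; intro l _
  apply Finset.sum_congr rfl; intro k _
  rw [conjTranspose_apply, HmatK_apply, HmatK_apply]

lemma gram_sum_ext (K : ℕ) (a b : ℕ → Fin K → ℂ) (i j : ℕ) {L L' : ℕ}
    (hi : i + 1 < L) (hL : L ≤ L') :
    ∑ l ∈ Finset.range L', (∑ k : Fin K, hfunK K a b i l k * star (hfunK K a b j l k))
      = ∑ l ∈ Finset.range L, (∑ k : Fin K, hfunK K a b i l k * star (hfunK K a b j l k)) := by
  symm
  apply Finset.sum_subset (Finset.range_subset_range.mpr hL)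
  intro x _ hx
  rw [Finset.mem_range, not_lt] at hx
  apply Finset.sum_eq_zero
  intro k _
  rw [hfunK_eq_zero (by omega) (by omega), zero_mul]

lemma hfunK_shift (K M0 : ℕ) (a b : ℕ → Fin K → ℂ) (i l : ℕ) (k : Fin K) :
    hfunK K (fun n => a (M0 + n)) (fun n => b (M0 + n)) i l k
      = hfunK K a b (M0 + i) (M0 + l) k := by
  unfold hfunK
  by_cases h1 : l = i
  · rw [if_pos h1, if_pos (show M0 + l = M0 + i by omega)]
    rfl
  · rw [if_neg h1, if_neg (show ¬ M0 + l = M0 + i by omega)]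
    by_cases h2 : l = i + 1
    · rw [if_pos h2, if_pos (show M0 + l = M0 + i + 1 by omega)]
      rfl
    · rw [if_neg h2, if_neg (show ¬ M0 + l = M0 + i + 1 by omega)]

lemma gram_top (K M N : ℕ) (a b : ℕ → Fin K → ℂ) (i j : Fin M) :
    (HmatK K (M+N) a b * (HmatK K (M+N) a b)ᴴ) (Fin.castAdd N i) (Fin.castAdd N j)
      = (HmatK K M a b * (HmatK K M a b)ᴴ) i j := by
  rw [gram_apply, gram_apply, Fin.coe_castAdd, Fin.coe_castAdd]
  exact gram_sum_ext K a b _ _ (by omega) (by omega)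

lemma gram_bottom (K M N : ℕ) (a b : ℕ → Fin K → ℂ) (i j : Fin N) :
    (HmatK K (M+N) a b * (HmatK K (M+N) a b)ᴴ) (Fin.natAdd M i) (Fin.natAdd M j)
      = (HmatK K N (fun n => a (M + n)) (fun n => b (M + n))
          * (HmatK K N (fun n => a (M + n)) (fun n => b (M + n)))ᴴ) i j := by
  rw [gram_apply, gram_apply, Fin.coe_natAdd, Fin.coe_natAdd]
  have hshift : ∀ l : ℕ,
      (∑ k : Fin K, hfunK K (fun n => a (M + n)) (fun n => b (M + n)) (i : ℕ) l k
        * star (hfunK K (fun n => a (M + n)) (fun n => b (M + n)) (j : ℕ) l k))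
      = ∑ k : Fin K, hfunK K a b (M + i) (M + l) k * star (hfunK K a b (M + j) (M + l) k) := by
    intro l
    apply Finset.sum_congr rfl
    intro k _
    rw [hfunK_shift, hfunK_shift]
  calc ∑ l ∈ Finset.range (M + N + 1),
        ∑ k : Fin K, hfunK K a b (M + i) l k * star (hfunK K a b (M + j) l k)
      = ∑ l ∈ Finset.Ico M (M + (N + 1)),
        ∑ k : Fin K, hfunK K a b (M + i) l k * star (hfunK K a b (M + j) l k) := by
        symm
        apply Finset.sum_subset
        · intro x hx
          rw [Finset.mem_Ico] at hx
          rw [Finset.mem_range]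
          omega
        · intro x _ hx
          rw [Finset.mem_Ico, not_and_or, not_le, not_lt] at hx
          have hxM : x < M ∨ M + (N+1) ≤ x := hx
          apply Finset.sum_eq_zero
          intro k _
          rw [hfunK_eq_zero (by omega) (by omega), zero_mul]
    _ = ∑ l ∈ Finset.range (N + 1),
        ∑ k : Fin K, hfunK K a b (M + i) (M + l) k * star (hfunK K a b (M + j) (M + l) k) := by
        rw [Finset.sum_Ico_eq_sum_range]
        simp
    _ = _ := by
        apply Finset.sum_congr rfl
        intro l _
        rw [← hshift]

noncomputable def GmatK (K M : ℕ) (P : ℝ) (a b : ℕ → Fin K → ℂ) :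
    Matrix (Fin M) (Fin M) ℂ :=
  1 + ((P / K : ℝ) : ℂ) • (HmatK K M a b * (HmatK K M a b)ᴴ)

lemma GmatK_posSemidef_part (K M : ℕ) (P : ℝ) (hP : 0 ≤ P) (a b : ℕ → Fin K → ℂ) :
    (((P / K : ℝ) : ℂ) • (HmatK K M a b * (HmatK K M a b)ᴴ)).PosSemidef :=
  my_smul_posSemidef (posSemidef_self_mul_conjTranspose _)
    (div_nonneg hP (Nat.cast_nonneg K))

lemma GmatK_posDef (K M : ℕ) (P : ℝ) (hP : 0 ≤ P) (a b : ℕ → Fin K → ℂ) :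
    (GmatK K M P a b).PosDef :=
  Matrix.PosDef.one.add_posSemidef (GmatK_posSemidef_part K M P hP a b)

lemma GmatK_det_ge_one (K M : ℕ) (P : ℝ) (hP : 0 ≤ P) (a b : ℕ → Fin K → ℂ) :
    1 ≤ (GmatK K M P a b).det :=
  my_det_one_add_posSemidef (GmatK_posSemidef_part K M P hP a b)

lemma logdetGK_eq (K M : ℕ) (P : ℝ) (a b : ℕ → Fin K → ℂ) :
    logdetGK K M P a b = Real.log ((GmatK K M P a b).det.re) := rfl

lemma logdetGK_nonneg (K M : ℕ) (P : ℝ) (hP : 0 ≤ P) (a b : ℕ → Fin K → ℂ) :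
    0 ≤ logdetGK K M P a b := by
  rw [logdetGK_eq]
  apply Real.log_nonneg
  exact (Complex.le_def.mp (GmatK_det_ge_one K M P hP a b)).1

lemma logdetGK_subadd (K : ℕ) (P : ℝ) (hP : 0 ≤ P) (M N : ℕ) (a b : ℕ → Fin K → ℂ) :
    logdetGK K (M+N) P a b
      ≤ logdetGK K M P a b + logdetGK K N P (fun n => a (M+n)) (fun n => b (M+n)) := by
  set e : Fin M ⊕ Fin N ≃ Fin (M+N) := finSumFinEquiv with he
  set Gb := GmatK K (M+N) P a b with hGb
  set G1 := GmatK K M P a b with hG1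
  set G2 := GmatK K N P (fun n => a (M+n)) (fun n => b (M+n)) with hG2
  have hB11 : (Gb.submatrix e e).toBlocks₁₁ = G1 := by
    ext i j
    show Gb (e (Sum.inl i)) (e (Sum.inl j)) = G1 i j
    rw [he]
    simp only [finSumFinEquiv_apply_left]
    rw [hGb, hG1]
    unfold GmatK
    simp only [Matrix.add_apply, Matrix.smul_apply, Matrix.one_apply]
    rw [gram_top]
    congr 1
    have : (Fin.castAdd N i = Fin.castAdd N j) ↔ (i = j) := by
      constructor
      · intro h; exact Fin.castAdd_injective _ _ h ▸ rfl
      · intro h; rw [h]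
    simp [this]
  have hB22 : (Gb.submatrix e e).toBlocks₂₂ = G2 := by
    ext i j
    show Gb (e (Sum.inr i)) (e (Sum.inr j)) = G2 i j
    rw [he]
    simp only [finSumFinEquiv_apply_right]
    rw [hGb, hG2]
    unfold GmatK
    simp only [Matrix.add_apply, Matrix.smul_apply, Matrix.one_apply]
    rw [gram_bottom]
    congr 1
    have : (Fin.natAdd M i = Fin.natAdd M j) ↔ (i = j) := by
      constructor
      · intro h
        have := congrArg (fun x : Fin (M+N) => (x : ℕ)) h
        simp only [Fin.coe_natAdd] at this
        exact Fin.ext (by omega)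
      · intro h; rw [h]
    simp [this]
  have hGbPD : Gb.PosDef := GmatK_posDef K (M+N) P hP a b
  have hdet : Gb.det ≤ G1.det * G2.det := by
    have h1 : (Gb.submatrix e e).det = Gb.det := det_submatrix_equiv_self e Gb
    have h2 := my_det_blocks_le (my_posDef_submatrix_equiv hGbPD e)
    rw [h1, hB11, hB22] at h2
    exact h2
  -- pass to real parts
  have h1ge := GmatK_det_ge_one K M P hP a b
  have h2ge := GmatK_det_ge_one K N P hP (fun n => a (M+n)) (fun n => b (M+n))
  have hbge := GmatK_det_ge_one K (M+N) P hP a b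
  have h1re : 1 ≤ G1.det.re := (Complex.le_def.mp h1ge).1
  have h2re : 1 ≤ G2.det.re := (Complex.le_def.mp h2ge).1
  have hbre : 1 ≤ Gb.det.re := (Complex.le_def.mp hbge).1
  have h1im : G1.det.im = 0 := by
    have := (Complex.le_def.mp h1ge).2; simpa using this.symm
  have h2im : G2.det.im = 0 := by
    have := (Complex.le_def.mp h2ge).2; simpa using this.symm
  have hmulre : (G1.det * G2.det).re = G1.det.re * G2.det.re := by
    rw [Complex.mul_re, h1im, h2im]; ring
  have hrele : Gb.det.re ≤ G1.det.re * G2.det.re := by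
    have := (Complex.le_def.mp hdet).1
    rwa [hmulre] at this
  rw [logdetGK_eq, logdetGK_eq, logdetGK_eq, ← hGb, ← hG1, ← hG2]
  calc Real.log Gb.det.re ≤ Real.log (G1.det.re * G2.det.re) := by
        apply Real.log_le_log (by linarith) hrele
  _ = _ := Real.log_mul (by linarith) (by linarith)

lemma gram_diag (K M : ℕ) (a b : ℕ → Fin K → ℂ) (i : Fin M) :
    (HmatK K M a b * (HmatK K M a b)ᴴ) i i
      = (((∑ k, Complex.normSq (a ((i : ℕ)+1) k)) + ∑ k, Complex.normSq (b ((i : ℕ)+1) k) : ℝ) : ℂ) := by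
  rw [gram_apply]
  have hsub : ({(i : ℕ), (i : ℕ)+1} : Finset ℕ) ⊆ Finset.range (M+1) := by
    intro x hx
    simp only [Finset.mem_insert, Finset.mem_singleton] at hx
    rw [Finset.mem_range]
    rcases hx with h | h <;> omega
  rw [← Finset.sum_subset hsub (by
    intro x _ hx
    simp only [Finset.mem_insert, Finset.mem_singleton, not_or] at hx
    apply Finset.sum_eq_zero
    intro k _
    rw [hfunK_eq_zero hx.1 hx.2, zero_mul])]
  rw [Finset.sum_insert (by simp), Finset.sum_singleton]
  have h1 : ∀ k : Fin K, hfunK K a b (i : ℕ) (i : ℕ) k = a ((i : ℕ)+1) k := by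
    intro k; unfold hfunK; rw [if_pos rfl]
  have h2 : ∀ k : Fin K, hfunK K a b (i : ℕ) ((i : ℕ)+1) k = b ((i : ℕ)+1) k := by
    intro k; unfold hfunK; rw [if_neg (by omega), if_pos rfl]
  have e1 : ∑ k : Fin K, hfunK K a b (i : ℕ) (i : ℕ) k * star (hfunK K a b (i : ℕ) (i : ℕ) k)
      = ∑ k : Fin K, ((Complex.normSq (a ((i : ℕ)+1) k) : ℝ) : ℂ) := by
    apply Finset.sum_congr rfl; intro k _
    rw [h1 k, Complex.star_def, Complex.mul_conj]
  have e2 : ∑ k : Fin K, hfunK K a b (i : ℕ) ((i : ℕ)+1) k * star (hfunK K a b (i : ℕ) ((i : ℕ)+1) k)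
      = ∑ k : Fin K, ((Complex.normSq (b ((i : ℕ)+1) k) : ℝ) : ℂ) := by
    apply Finset.sum_congr rfl; intro k _
    rw [h2 k, Complex.star_def, Complex.mul_conj]
  rw [e1, e2]
  push_cast
  ring

lemma GmatK_diag_re (K M : ℕ) (P : ℝ) (a b : ℕ → Fin K → ℂ) (i : Fin M) :
    (GmatK K M P a b) i i
      = ((1 + (P/K) * ((∑ k, Complex.normSq (a ((i : ℕ)+1) k))
          + ∑ k, Complex.normSq (b ((i : ℕ)+1) k)) : ℝ) : ℂ) := by
  unfold GmatK
  simp only [Matrix.add_apply, Matrix.smul_apply, Matrix.one_apply_eq]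
  rw [gram_diag, smul_eq_mul]
  push_cast
  ring

lemma logdetGK_le_sum (K M : ℕ) (P : ℝ) (hP : 0 ≤ P) (a b : ℕ → Fin K → ℂ) :
    logdetGK K M P a b ≤ ∑ i : Fin M,
      Real.log (1 + (P/K) * ((∑ k, Complex.normSq (a ((i : ℕ)+1) k))
          + ∑ k, Complex.normSq (b ((i : ℕ)+1) k))) := by
  have hρ : 0 ≤ P / K := div_nonneg hP (Nat.cast_nonneg K)
  set d := fun i : Fin M => (1 + (P/K) * ((∑ k, Complex.normSq (a ((i : ℕ)+1) k))
          + ∑ k, Complex.normSq (b ((i : ℕ)+1) k)) : ℝ) with hd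
  have hd1 : ∀ i, 1 ≤ d i := by
    intro i
    rw [hd]
    have : 0 ≤ (∑ k, Complex.normSq (a ((i : ℕ)+1) k)) + ∑ k, Complex.normSq (b ((i : ℕ)+1) k) := by
      apply add_nonneg <;> exact Finset.sum_nonneg (fun k _ => Complex.normSq_nonneg _)
    nlinarith
  have hprod : ∏ i, (GmatK K M P a b) i i = ((∏ i, d i : ℝ) : ℂ) := by
    rw [Complex.ofReal_prod]
    apply Finset.prod_congr rfl
    intro i _
    rw [GmatK_diag_re]
  have hH := my_hadamard M _ (GmatK_posDef K M P hP a b)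
  rw [hprod] at hH
  have hre : (GmatK K M P a b).det.re ≤ ∏ i, d i := by
    have := (Complex.le_def.mp hH).1
    rwa [Complex.ofReal_re] at this
  have hge1 : (1:ℝ) ≤ (GmatK K M P a b).det.re := (Complex.le_def.mp (GmatK_det_ge_one K M P hP a b)).1
  rw [logdetGK_eq]
  calc Real.log (GmatK K M P a b).det.re ≤ Real.log (∏ i, d i) :=
        Real.log_le_log (by linarith) hre
  _ = ∑ i, Real.log (d i) := by
        apply Real.log_prod
        intro i _
        have := hd1 i; linarith
  _ = _ := by apply Finset.sum_congr rfl; intro i _; rw [hd]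

lemma one_add_sum_le_prod {ι : Type*} (s : Finset ι) (f : ι → ℝ) (hf : ∀ i ∈ s, 0 ≤ f i) :
    1 + ∑ i ∈ s, f i ≤ ∏ i ∈ s, (1 + f i) := by
  classical
  induction s using Finset.induction_on with
  | empty => simp
  | insert x s' hx ih =>
    rw [Finset.sum_insert hx, Finset.prod_insert hx]
    have hfx : 0 ≤ f x := hf x (Finset.mem_insert_self x s')
    have hs' : ∀ i ∈ s', 0 ≤ f i := fun i hi => hf i (Finset.mem_insert_of_mem hi)
    have hsum : 0 ≤ ∑ i ∈ s', f i := Finset.sum_nonneg hs'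
    have := ih hs'
    nlinarith

lemma log_one_add_sq_le (x : ℝ) (hx : 0 ≤ x) :
    Real.log (1 + x^2) ≤ Real.log 2 + 1 + (Real.log x)^2 := by
  rcases le_or_gt x 1 with h | h
  · have h1 : Real.log (1 + x^2) ≤ Real.log 2 := by
      apply Real.log_le_log (by nlinarith)
      nlinarith
    nlinarith [sq_nonneg (Real.log x)]
  · have h1 : Real.log (1 + x^2) ≤ Real.log (2 * x^2) := by
      apply Real.log_le_log (by nlinarith)
      nlinarith
    have h2 : Real.log (2 * x^2) = Real.log 2 + 2 * Real.log x := by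
      rw [Real.log_mul (by norm_num) (by nlinarith), Real.log_pow]
      push_cast; ring
    nlinarith [sq_nonneg (Real.log x - 1)]

lemma log_row_bound (K : ℕ) (ρ : ℝ) (hρ : 0 ≤ ρ) (u v : Fin K → ℝ)
    (hu : ∀ k, 0 ≤ u k) (hv : ∀ k, 0 ≤ v k) :
    Real.log (1 + ρ * ((∑ k, u k) + ∑ k, v k))
      ≤ Real.log (1 + ρ) + (∑ k, Real.log (1 + u k)) + ∑ k, Real.log (1 + v k) := by
  have hsu : 0 ≤ ∑ k, u k := Finset.sum_nonneg (fun k _ => hu k)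
  have hsv : 0 ≤ ∑ k, v k := Finset.sum_nonneg (fun k _ => hv k)
  have hpu : 1 + ∑ k, u k ≤ ∏ k, (1 + u k) := one_add_sum_le_prod _ _ (fun k _ => hu k)
  have hpv : 1 + ∑ k, v k ≤ ∏ k, (1 + v k) := one_add_sum_le_prod _ _ (fun k _ => hv k)
  have hprodu_pos : (0:ℝ) < ∏ k, (1 + u k) := by
    apply Finset.prod_pos; intro k _; have := hu k; linarith
  have hprodv_pos : (0:ℝ) < ∏ k, (1 + v k) := by
    apply Finset.prod_pos; intro k _; have := hv k; linarith
  have hchain : 1 + ρ * ((∑ k, u k) + ∑ k, v k)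
      ≤ (1 + ρ) * ((∏ k, (1 + u k)) * ∏ k, (1 + v k)) := by
    have h1 : 1 + ρ * ((∑ k, u k) + ∑ k, v k) ≤ (1 + ρ) * (1 + ((∑ k, u k) + ∑ k, v k)) := by
      nlinarith
    have h2 : 1 + ((∑ k, u k) + ∑ k, v k) ≤ (1 + ∑ k, u k) * (1 + ∑ k, v k) := by nlinarith
    have h3 : (1 + ∑ k, u k) * (1 + ∑ k, v k) ≤ (∏ k, (1 + u k)) * ∏ k, (1 + v k) := by
      apply mul_le_mul hpu hpv (by linarith) (by linarith)
    nlinarith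
  calc Real.log (1 + ρ * ((∑ k, u k) + ∑ k, v k))
      ≤ Real.log ((1 + ρ) * ((∏ k, (1 + u k)) * ∏ k, (1 + v k))) := by
        apply Real.log_le_log (by nlinarith) hchain
  _ = Real.log (1 + ρ) + ((∑ k, Real.log (1 + u k)) + ∑ k, Real.log (1 + v k)) := by
        rw [Real.log_mul (by nlinarith) (by positivity), Real.log_mul (by positivity) (by positivity),
          Real.log_prod (fun k _ => by have := hu k; positivity),
          Real.log_prod (fun k _ => by have := hv k; positivity)]
  _ = _ := by ring

lemma my_joint_law {Ω : Type*} [MeasureSpace Ω] [IsProbabilityMeasure (ℙ : Measure Ω)]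
    {ι₀ : Type*} {ι : Type*} [Fintype ι]
    (Z : ι₀ → Ω → ℂ) (hZ : ∀ i, Measurable (Z i))
    (hind : iIndepFun Z ℙ)
    (g : ι → ι₀) (hg : Function.Injective g) :
    Measure.map (fun ω (i : ι) => Z (g i) ω) ℙ
      = Measure.pi (fun i => Measure.map (Z (g i)) ℙ) := by
  classical
  symm
  haveI : ∀ i : ι, IsProbabilityMeasure (Measure.map (Z (g i)) ℙ) := fun i =>
    Measure.isProbabilityMeasure_map (hZ (g i)).aemeasurable
  apply Measure.pi_eq
  intro s hs
  have hT : Measurable (fun ω (i : ι) => Z (g i) ω) :=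
    measurable_pi_lambda _ (fun i => hZ (g i))
  rw [Measure.map_apply hT (MeasurableSet.univ_pi hs)]
  have hpre : (fun ω (i : ι) => Z (g i) ω) ⁻¹' (Set.univ.pi s) = ⋂ i, Z (g i) ⁻¹' (s i) := by
    ext ω
    simp [Set.mem_pi]
  rw [hpre]
  set s' : ι₀ → Set ℂ := Function.extend g s (fun _ => Set.univ) with hs'def
  have hs'g : ∀ i, s' (g i) = s i := fun i => hg.extend_apply s _ i
  have h1 : (⋂ i, Z (g i) ⁻¹' (s i)) = ⋂ j ∈ Finset.image g Finset.univ, Z j ⁻¹' (s' j) := by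
    ext ω
    simp only [Set.mem_iInter, Set.mem_preimage]
    constructor
    · intro h j hj
      rcases Finset.mem_image.mp hj with ⟨i, _, rfl⟩
      rw [hs'g]
      exact h i
    · intro h i
      have := h (g i) (Finset.mem_image_of_mem g (Finset.mem_univ i))
      rwa [hs'g] at this
  rw [h1, hind.meas_biInter (fun j hj => ?_)]
  · rw [Finset.prod_image (fun i _ j _ h => hg h)]
    apply Finset.prod_congr rfl
    intro i _
    rw [hs'g, Measure.map_apply (hZ (g i)) (hs i)]
  · rcases Finset.mem_image.mp hj with ⟨i, _, rfl⟩
    exact ⟨s i, hs i, by rw [hs'g]⟩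

lemma HmatK_congr (K M : ℕ) (a1 b1 a2 b2 : ℕ → Fin K → ℂ)
    (ha : ∀ n k, 1 ≤ n → n ≤ M → a1 n k = a2 n k)
    (hb : ∀ n k, 1 ≤ n → n ≤ M → b1 n k = b2 n k) :
    HmatK K M a1 b1 = HmatK K M a2 b2 := by
  ext i jk
  unfold HmatK
  have hi := i.isLt
  split_ifs
  · exact ha _ _ (by omega) (by omega)
  · exact hb _ _ (by omega) (by omega)
  · rfl

lemma logdetGK_congr (K M : ℕ) (P : ℝ) (a1 b1 a2 b2 : ℕ → Fin K → ℂ)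
    (ha : ∀ n k, 1 ≤ n → n ≤ M → a1 n k = a2 n k)
    (hb : ∀ n k, 1 ≤ n → n ≤ M → b1 n k = b2 n k) :
    logdetGK K M P a1 b1 = logdetGK K M P a2 b2 := by
  unfold logdetGK
  rw [HmatK_congr K M a1 b1 a2 b2 ha hb]

lemma logdetGK_le_Phi (K N : ℕ) (P : ℝ) (hP : 0 ≤ P) (a b : ℕ → Fin K → ℂ) :
    logdetGK K N P a b ≤ ∑ i : Fin N,
      (Real.log (1 + P/K)
        + (∑ k, (Real.log 2 + 1 + (Real.log (‖a ((i : ℕ)+1) k‖))^2))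
        + (∑ k, (Real.log 2 + 1 + (Real.log (‖b ((i : ℕ)+1) k‖))^2))) := by
  have hρ : 0 ≤ P / K := div_nonneg hP (Nat.cast_nonneg K)
  refine le_trans (logdetGK_le_sum K N P hP a b) (Finset.sum_le_sum (fun i _ => ?_))
  refine le_trans (log_row_bound K _ hρ _ _ (fun k => Complex.normSq_nonneg _)
    (fun k => Complex.normSq_nonneg _)) ?_
  gcongr with k _ k _
  · calc Real.log (1 + Complex.normSq (a ((i : ℕ)+1) k))
        = Real.log (1 + (‖a ((i : ℕ)+1) k‖)^2) := by rw [Complex.sq_norm]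
    _ ≤ _ := log_one_add_sq_le _ (norm_nonneg _)
  · calc Real.log (1 + Complex.normSq (b ((i : ℕ)+1) k))
        = Real.log (1 + (‖b ((i : ℕ)+1) k‖)^2) := by rw [Complex.sq_norm]
    _ ≤ _ := log_one_add_sq_le _ (norm_nonneg _)

lemma integrable_logdetGK {Ω : Type*} [MeasureSpace Ω] [IsProbabilityMeasure (ℙ : Measure Ω)]
    (K N : ℕ) (P : ℝ) (hP : 0 ≤ P) (A B : ℕ → Fin K → Ω → ℂ)
    (hA : ∀ n k, Integrable (fun ω => (Real.log (‖A n k ω‖))^2) ℙ)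
    (hB : ∀ n k, Integrable (fun ω => (Real.log (‖B n k ω‖))^2) ℙ)
    (hmeas : Measurable (fun ω => logdetGK K N P (fun n k => A n k ω) (fun n k => B n k ω))) :
    Integrable (fun ω => logdetGK K N P (fun n k => A n k ω) (fun n k => B n k ω)) ℙ := by
  set Φ : Ω → ℝ := fun ω => ∑ i : Fin N,
      (Real.log (1 + P/K)
        + (∑ k, (Real.log 2 + 1 + (Real.log (‖A ((i : ℕ)+1) k ω‖))^2))
        + (∑ k, (Real.log 2 + 1 + (Real.log (‖B ((i : ℕ)+1) k ω‖))^2))) with hΦ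
  have hΦint : Integrable Φ ℙ := by
    apply integrable_finset_sum
    intro i _
    apply Integrable.add
    apply Integrable.add
    · exact integrable_const _
    · apply integrable_finset_sum
      intro k _
      exact (integrable_const _).add (hA _ k)
    · apply integrable_finset_sum
      intro k _
      exact (integrable_const _).add (hB _ k)
  apply Integrable.mono' hΦint hmeas.aestronglyMeasurable
  apply Filter.Eventually.of_forall
  intro ω
  rw [Real.norm_eq_abs, abs_of_nonneg (logdetGK_nonneg K N P hP _ _)]
  exact logdetGK_le_Phi K N P hP _ _

/-! ### The index injections and the cylinder functional -/

def idxmapK (K N M₀ : ℕ) :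
    (Fin N × Fin K) ⊕ (Fin N × Fin K) → (ℕ × Fin K) ⊕ (ℕ × Fin K) :=
  Sum.map (fun p => (M₀ + (p.1 : ℕ) + 1, p.2)) (fun p => (M₀ + (p.1 : ℕ) + 1, p.2))

lemma idxmapK_inj (K N M₀ : ℕ) : Function.Injective (idxmapK K N M₀) := by
  rintro (⟨i, k⟩ | ⟨i, k⟩) (⟨j, l⟩ | ⟨j, l⟩) h <;>
    simp only [idxmapK, Sum.map, Sum.elim_inl, Sum.elim_inr, Function.comp,
      Sum.inl.injEq, Sum.inr.injEq, Prod.mk.injEq, reduceCtorEq] at h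
  · obtain ⟨h1, h2⟩ := h
    have : i = j := Fin.ext (by omega)
    subst this; subst h2; rfl
  · obtain ⟨h1, h2⟩ := h
    have : i = j := Fin.ext (by omega)
    subst this; subst h2; rfl

noncomputable def PsiK (K N : ℕ) (P : ℝ)
    (z : (Fin N × Fin K) ⊕ (Fin N × Fin K) → ℂ) : ℝ :=
  logdetGK K N P
    (fun n k => if h : n - 1 < N then z (Sum.inl (⟨n - 1, h⟩, k)) else 0)
    (fun n k => if h : n - 1 < N then z (Sum.inr (⟨n - 1, h⟩, k)) else 0)

lemma PsiK_measurable (K N : ℕ) (P : ℝ) : Measurable (PsiK K N P) := by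
  have hH : Continuous (fun z : ((Fin N × Fin K) ⊕ (Fin N × Fin K)) → ℂ =>
      HmatK K N
        (fun n k => if h : n - 1 < N then z (Sum.inl (⟨n - 1, h⟩, k)) else 0)
        (fun n k => if h : n - 1 < N then z (Sum.inr (⟨n - 1, h⟩, k)) else 0)) := by
    apply continuous_matrix
    intro i jk
    unfold HmatK
    dsimp only
    split_ifs <;> first | exact continuous_apply _ | exact continuous_const
  have hdet : Continuous (fun z : ((Fin N × Fin K) ⊕ (Fin N × Fin K)) → ℂ =>
      (Matrix.det (1 + ((P / K : ℝ) : ℂ) •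
        (HmatK K N
          (fun n k => if h : n - 1 < N then z (Sum.inl (⟨n - 1, h⟩, k)) else 0)
          (fun n k => if h : n - 1 < N then z (Sum.inr (⟨n - 1, h⟩, k)) else 0) *
         (HmatK K N
          (fun n k => if h : n - 1 < N then z (Sum.inl (⟨n - 1, h⟩, k)) else 0)
          (fun n k => if h : n - 1 < N then z (Sum.inr (⟨n - 1, h⟩, k)) else 0))ᴴ)))) := by
    apply Continuous.matrix_det
    exact continuous_const.add (((hH.matrix_mul hH.matrix_conjTranspose).const_smul ((P / K : ℝ) : ℂ)).congr fun _ => rfl)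
  exact Real.measurable_log.comp (Complex.measurable_re.comp hdet.measurable)

lemma PsiK_spec {Ω : Type*} (K N M₀ : ℕ) (P : ℝ) (a b : ℕ → Fin K → Ω → ℂ) (ω : Ω) :
    PsiK K N P (fun i =>
        Sum.elim (fun p : ℕ × Fin K => a p.1 p.2) (fun p : ℕ × Fin K => b p.1 p.2)
          (idxmapK K N M₀ i) ω)
      = logdetGK K N P (fun n k => a (M₀ + n) k ω) (fun n k => b (M₀ + n) k ω) := by
  unfold PsiK
  apply logdetGK_congr
  · intro n k h1 h2
    have hn : n - 1 < N := by omega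
    rw [dif_pos hn]
    show a (M₀ + (n - 1) + 1) k ω = a (M₀ + n) k ω
    congr 1
    omega
  · intro n k h1 h2
    have hn : n - 1 < N := by omega
    rw [dif_pos hn]
    show b (M₀ + (n - 1) + 1) k ω = b (M₀ + n) k ω
    congr 1
    omega

theorem statement4
    {Ω : Type*} [MeasureSpace Ω] [IsProbabilityMeasure (ℙ : Measure Ω)]
    (K : ℕ) (hK : 1 < K)
    (πa πb : Measure ℂ) [IsProbabilityMeasure πa] [IsProbabilityMeasure πb]
    (a b : ℕ → Fin K → Ω → ℂ)
    (ha_meas : ∀ n k, Measurable (a n k)) (hb_meas : ∀ n k, Measurable (b n k))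
    (ha_law : ∀ n k, Measure.map (a n k) ℙ = πa)
    (hb_law : ∀ n k, Measure.map (b n k) ℙ = πb)
    (h_indep : iIndepFun
      (Sum.elim (fun p : ℕ × Fin K => a p.1 p.2) (fun p : ℕ × Fin K => b p.1 p.2)) ℙ)
    -- (H1)
    (H1a : Integrable (fun x : ℂ => (Real.log (‖x‖)) ^ 2) πa)
    (H1b : Integrable (fun x : ℂ => (Real.log (‖x‖)) ^ 2) πb)
    -- (H2)
    (H2a : πa ≪ (volume : Measure ℂ)) (H2b : πb ≪ (volume : Measure ℂ))
    -- (H4)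
    (H4 : ∃ (c : ℂ) (r : ℝ),
      volume.restrict (Metric.ball c r)ᶜ ≪ πa ∧
      volume.restrict (Metric.ball c r)ᶜ ≪ πb)
    (P : ℝ) (hP : 0 < P) :
    ∃ L : ℝ, Tendsto
      (fun M : ℕ =>
        (1 / (M : ℝ)) *
          ∫ ω, logdetGK K M P (fun n k => a n k ω) (fun n k => b n k ω) ∂ℙ)
      atTop (nhds L) := by
  classical
  have hP0 : (0 : ℝ) ≤ P := hP.le
  set Z : (ℕ × Fin K) ⊕ (ℕ × Fin K) → Ω → ℂ :=
    Sum.elim (fun p => a p.1 p.2) (fun p => b p.1 p.2) with hZdef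
  have hZmeas : ∀ i, Measurable (Z i) := by
    rintro (p | p)
    · exact ha_meas p.1 p.2
    · exact hb_meas p.1 p.2
  -- integrability of the squared logs
  have hint_a : ∀ n k, Integrable (fun ω => (Real.log (‖a n k ω‖)) ^ 2) ℙ := by
    intro n k
    have h1 : Integrable (fun x : ℂ => (Real.log (‖x‖)) ^ 2)
        (Measure.map (a n k) ℙ) := by
      rw [ha_law n k]; exact H1a
    exact (integrable_map_measure h1.aestronglyMeasurable (ha_meas n k).aemeasurable).mp h1
  have hint_b : ∀ n k, Integrable (fun ω => (Real.log (‖b n k ω‖)) ^ 2) ℙ := by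
    intro n k
    have h1 : Integrable (fun x : ℂ => (Real.log (‖x‖)) ^ 2)
        (Measure.map (b n k) ℙ) := by
      rw [hb_law n k]; exact H1b
    exact (integrable_map_measure h1.aestronglyMeasurable (hb_meas n k).aemeasurable).mp h1
  -- the shifted integrand
  set Y : ℕ → ℕ → Ω → ℝ := fun N M₀ ω =>
    logdetGK K N P (fun n k => a (M₀ + n) k ω) (fun n k => b (M₀ + n) k ω) with hYdef
  have hTmeas : ∀ N M₀ : ℕ,
      Measurable (fun ω (i : (Fin N × Fin K) ⊕ (Fin N × Fin K)) => Z (idxmapK K N M₀ i) ω) :=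
    fun N M₀ => measurable_pi_lambda _ (fun i => hZmeas _)
  have hYrep : ∀ N M₀ : ℕ, Y N M₀ =
      (fun ω => PsiK K N P (fun i => Z (idxmapK K N M₀ i) ω)) := by
    intro N M₀
    funext ω
    rw [hYdef]
    exact (PsiK_spec K N M₀ P a b ω).symm
  have hYmeas : ∀ N M₀ : ℕ, Measurable (Y N M₀) := by
    intro N M₀
    rw [hYrep]
    exact (PsiK_measurable K N P).comp (hTmeas N M₀)
  have hlaw : ∀ N M₀ : ℕ,
      Measure.map (fun ω (i : (Fin N × Fin K) ⊕ (Fin N × Fin K)) => Z (idxmapK K N M₀ i) ω) ℙ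
        = Measure.pi (fun i => Sum.elim (fun _ : Fin N × Fin K => πa)
            (fun _ : Fin N × Fin K => πb) i) := by
    intro N M₀
    rw [my_joint_law Z hZmeas h_indep _ (idxmapK_inj K N M₀)]
    congr 1
    funext i
    cases i with
    | inl p => exact ha_law _ _
    | inr p => exact hb_law _ _
  have hint : ∀ N M₀ : ℕ, ∫ ω, Y N M₀ ω ∂ℙ = ∫ ω, Y N 0 ω ∂ℙ := by
    intro N M₀
    rw [hYrep, hYrep]
    rw [← integral_map (hTmeas N M₀).aemeasurable (PsiK_measurable K N P).aestronglyMeasurable,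
      ← integral_map (hTmeas N 0).aemeasurable (PsiK_measurable K N P).aestronglyMeasurable,
      hlaw N M₀, hlaw N 0]
  have hYint : ∀ N M₀ : ℕ, Integrable (Y N M₀) ℙ := by
    intro N M₀
    exact integrable_logdetGK K N P hP0 (fun n k => a (M₀ + n) k) (fun n k => b (M₀ + n) k)
      (fun n k => hint_a (M₀ + n) k) (fun n k => hint_b (M₀ + n) k) (hYmeas N M₀)
  -- Y N 0 equals the integrand of the statement
  have hY0 : ∀ (N : ℕ) (ω : Ω), Y N 0 ω
      = logdetGK K N P (fun n k => a n k ω) (fun n k => b n k ω) := by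
    intro N ω
    rw [hYdef]
    apply logdetGK_congr
    · intro n k _ _; rw [Nat.zero_add]
    · intro n k _ _; rw [Nat.zero_add]
  set u : ℕ → ℝ := fun M => ∫ ω, Y M 0 ω ∂ℙ with hudef
  have husub : Subadditive u := by
    intro M N
    have hpt : ∀ ω, Y (M + N) 0 ω ≤ Y M 0 ω + Y N M ω := by
      intro ω
      rw [hY0 (M + N) ω, hY0 M ω]
      have h := logdetGK_subadd K P hP0 M N (fun n k => a n k ω) (fun n k => b n k ω)
      exact h
    calc u (M + N) ≤ ∫ ω, (Y M 0 ω + Y N M ω) ∂ℙ := by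
          apply integral_mono_of_nonneg
          · exact Filter.Eventually.of_forall (fun ω => logdetGK_nonneg K (M+N) P hP0 _ _)
          · exact (hYint M 0).add (hYint N M)
          · exact Filter.Eventually.of_forall hpt
    _ = (∫ ω, Y M 0 ω ∂ℙ) + ∫ ω, Y N M ω ∂ℙ := integral_add (hYint M 0) (hYint N M)
    _ = u M + u N := by rw [hint N M]
  have hbdd : BddBelow (Set.range fun n : ℕ => u n / n) := by
    refine ⟨0, ?_⟩
    rintro x ⟨n, rfl⟩
    apply div_nonneg _ (Nat.cast_nonneg n)
    apply integral_nonneg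
    intro ω
    exact logdetGK_nonneg K n P hP0 _ _
  refine ⟨husub.lim, ?_⟩
  apply (husub.tendsto_lim hbdd).congr
  intro M
  have : ∫ ω, logdetGK K M P (fun n k => a n k ω) (fun n k => b n k ω) ∂ℙ = u M := by
    rw [hudef]
    apply integral_congr_ae
    exact Filter.Eventually.of_forall (fun ω => (hY0 M ω).symm)
  rw [this]
  ring
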